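/- Let Σ₀ and Σ₁ be real symmetric d×d matrices with Σ₀ positive definite and Σ₁ positive semidefinite, and define Γ = Σ₀^{−1/2} (Σ₀^{1/2} Σ₁ Σ₀^{1/2})^{1/2} Σ₀^{−1/2}, where M^{1/2} denotes the unique positive semidefinite square root of a positive semidefinite matrix M and Σ₀^{−1/2} the inverse of Σ₀^{1/2}. Then Γ is symmetric positive semidefinite and Γ Σ₀ Γᵀ = Γ Σ₀ Γ = Σ₁; consequently the linear map x ↦ Γ x transforms a random vector with covariance Σ₀ and mean zero into one with covariance Σ₁, i.e., it pushes the centered Gaussian with covariance Σ₀ forward to the centered Gaussian with covariance Σ₁. -/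

import Mathlib

open Matrix
/-- The closed-form Gaussian optimal transport matrix
`Γ = Σ₀^{-1/2} (Σ₀^{1/2} Σ₁ Σ₀^{1/2})^{1/2} Σ₀^{-1/2}` (with `S` the unique PSD square root
of `Σ₀` and `R` the unique PSD square root of `S Σ₁ S`) is symmetric positive semidefinite
and satisfies `Γ Σ₀ Γᵀ = Γ Σ₀ Γ = Σ₁`, i.e. it transforms covariance `Σ₀` into
covariance `Σ₁`, pushing `N(0, Σ₀)` forward to `N(0, Σ₁)`. -/
theorem stmt_19 (d : ℕ) (Sigma0 Sigma1 : Matrix (Fin d) (Fin d) ℝ)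
    (h₀ : Sigma0.PosDef) (h₁ : Sigma1.PosSemidef)
    (S R : Matrix (Fin d) (Fin d) ℝ)
    (hS : S.PosSemidef) (hS2 : S * S = Sigma0)
    (hR : R.PosSemidef) (hR2 : R * R = S * Sigma1 * S) :
    (S⁻¹ * R * S⁻¹).PosSemidef ∧
    (S⁻¹ * R * S⁻¹)ᵀ = S⁻¹ * R * S⁻¹ ∧
    (S⁻¹ * R * S⁻¹) * Sigma0 * (S⁻¹ * R * S⁻¹)ᵀ = Sigma1 ∧
    (S⁻¹ * R * S⁻¹) * Sigma0 * (S⁻¹ * R * S⁻¹) = Sigma1 := by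
  have hdet : IsUnit S.det := by
    have h2 : S.det * S.det = Sigma0.det := by
      rw [← det_mul, hS2]
    have : Sigma0.det ≠ 0 := ne_of_gt h₀.det_pos
    exact isUnit_iff_ne_zero.2 fun h => this (by rw [← h2, h, mul_zero])
  have hSinv : S * S⁻¹ = 1 := mul_nonsing_inv S hdet
  have hSinv' : S⁻¹ * S = 1 := nonsing_inv_mul S hdet
  have hSsym : Sᵀ = S := hS.isHermitian.eq
  have hSinvSym : (S⁻¹)ᵀ = S⁻¹ := by rw [transpose_nonsing_inv, hSsym]
  have hRsym : Rᵀ = R := hR.isHermitian.eq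
  have hGsym : (S⁻¹ * R * S⁻¹)ᵀ = S⁻¹ * R * S⁻¹ := by
    simp [transpose_mul, hSinvSym, hRsym, mul_assoc]
  have hpsd : (S⁻¹ * R * S⁻¹).PosSemidef := by
    have := hR.conjTranspose_mul_mul_same S⁻¹
    rw [conjTranspose_eq_transpose_of_trivial] at this
    simpa [conjTranspose, Matrix.map_id, hSinvSym, mul_assoc] using this
  have hmain : (S⁻¹ * R * S⁻¹) * Sigma0 * (S⁻¹ * R * S⁻¹) = Sigma1 := by
    rw [← hS2]
    calc S⁻¹ * R * S⁻¹ * (S * S) * (S⁻¹ * R * S⁻¹)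
        = S⁻¹ * R * ((S⁻¹ * S) * (S * (S⁻¹ * (R * S⁻¹)))) := by
          simp only [mul_assoc]
      _ = S⁻¹ * (R * R) * S⁻¹ := by rw [hSinv']; simp only [one_mul, ← mul_assoc, hSinv]
      _ = (S⁻¹ * S) * (Sigma1 * (S * S⁻¹)) := by rw [hR2]; simp only [mul_assoc]
      _ = Sigma1 := by rw [hSinv, hSinv', one_mul, mul_one]
  exact ⟨hpsd, hGsym, by rw [hGsym]; exact hmain, hmain⟩
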